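/- Let G be a finite group with |G| ≥ 3, let m = |G|, and let d : End(G) → ℤ/m be a monoid homomorphism mapping into the multiplicative monoid. In the monoid M(G) = ⨿_{α ∈ End(G)} {x ∈ ℤ : x ≡ d(α) mod m}, the group of units is isomorphic to {α ∈ Aut(G) : d(α) = 1 or d(α) = -1 in ℤ/m}, where the unit corresponding to such α is the unique element of {±1} congruent to d(α) mod m in component M_α. -/

import Mathlib

/-- The space-form monoid `M(G,n)`: disjoint union over `α` in a monoid `M`
(e.g. `Monoid.End G`) of the residue classes `{x : ℤ | x ≡ d α mod m}`. -/
def SFM (M : Type*) [Monoid M] (m : ℕ) (d : M →* ZMod m) : Type _ :=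
  Σ α : M, {x : ℤ // (x : ZMod m) = d α}

instance SFM.instMonoid (M : Type*) [Monoid M] (m : ℕ) (d : M →* ZMod m) :
    Monoid (SFM M m d) where
  mul a b := ⟨a.1 * b.1, ⟨a.2.1 * b.2.1, by
    push_cast [a.2.2, b.2.2]; rw [← map_mul]⟩⟩
  one := ⟨1, ⟨1, by rw [Int.cast_one, map_one]⟩⟩
  mul_assoc a b c := by
    refine Sigma.ext (mul_assoc _ _ _) ?_
    rw [Subtype.heq_iff_coe_eq (fun t => by
      show (t : ZMod m) = d (a.1 * b.1 * c.1) ↔ (t : ZMod m) = d (a.1 * (b.1 * c.1))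
      rw [mul_assoc])]
    exact mul_assoc _ _ _
  one_mul a := by
    refine Sigma.ext (one_mul _) ?_
    rw [Subtype.heq_iff_coe_eq (fun t => by
      show (t : ZMod m) = d (1 * a.1) ↔ (t : ZMod m) = d a.1
      rw [one_mul])]
    exact one_mul _
  mul_one a := by
    refine Sigma.ext (mul_one _) ?_
    rw [Subtype.heq_iff_coe_eq (fun t => by
      show (t : ZMod m) = d (a.1 * 1) ↔ (t : ZMod m) = d a.1
      rw [mul_one])]
    exact mul_one _

namespace SFMaux

lemma SFM.ext' {M : Type*} [Monoid M] {m : ℕ} {d : M →* ZMod m}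
    {a b : SFM M m d} (h1 : a.1 = b.1) (h2 : a.2.1 = b.2.1) : a = b := by
  rcases a with ⟨α, x⟩; rcases b with ⟨β, y⟩
  dsimp at h1 h2; subst h1
  exact congrArg _ (Subtype.ext h2)

variable {G : Type*} [Group G] [Finite G]
  (d : Monoid.End G →* ZMod (Nat.card G))

lemma snd_pm (u : (SFM (Monoid.End G) (Nat.card G) d)ˣ) :
    u.val.2.1 = 1 ∨ u.val.2.1 = -1 := by
  have h : u.val.2.1 * u.inv.2.1 = 1 :=
    congrArg (fun a : SFM (Monoid.End G) (Nat.card G) d => a.2.1) u.val_inv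
  exact Int.isUnit_iff.mp (IsUnit.of_mul_eq_one _ h)

def theAut (u : (SFM (Monoid.End G) (Nat.card G) d)ˣ) : MulAut G where
  toFun := u.val.1
  invFun := u.inv.1
  left_inv x := by
    have h := DFunLike.congr_fun (congrArg Sigma.fst u.inv_val) x
    exact h
  right_inv x := by
    have h := DFunLike.congr_fun (congrArg Sigma.fst u.val_inv) x
    exact h
  map_mul' := map_mul _

lemma theAut_toMonoidHom (u : (SFM (Monoid.End G) (Nat.card G) d)ˣ) :
    (theAut d u).toMonoidHom = u.val.1 := MonoidHom.ext fun _ => rfl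

def fwd (u : (SFM (Monoid.End G) (Nat.card G) d)ˣ) :
    {α : MulAut G // d α.toMonoidHom = 1 ∨ d α.toMonoidHom = -1} := ⟨theAut d u, by
  have h2 := u.val.2.2
  rw [theAut_toMonoidHom, ← h2]
  rcases snd_pm d u with h | h <;> rw [h] <;> [left; right] <;> push_cast <;> ring⟩

noncomputable def eps (a : {α : MulAut G // d α.toMonoidHom = 1 ∨ d α.toMonoidHom = -1}) : ℤ :=
  if d a.1.toMonoidHom = 1 then 1 else -1

lemma eps_sq (a : {α : MulAut G // d α.toMonoidHom = 1 ∨ d α.toMonoidHom = -1}) :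
    eps d a * eps d a = 1 := by
  unfold eps; split <;> norm_num

lemma eps_cast (a : {α : MulAut G // d α.toMonoidHom = 1 ∨ d α.toMonoidHom = -1}) :
    ((eps d a : ℤ) : ZMod (Nat.card G)) = d a.1.toMonoidHom := by
  unfold eps
  split
  · next h => push_cast; exact h.symm
  · next h =>
    rcases a.2 with h1 | h1
    · exact absurd h1 h
    · push_cast; exact h1.symm

lemma comp_inv (a : {α : MulAut G // d α.toMonoidHom = 1 ∨ d α.toMonoidHom = -1}) :
    (show Monoid.End G from MulEquiv.toMonoidHom a.1) * (show Monoid.End G from MulEquiv.toMonoidHom a.1⁻¹) = 1 := by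
  refine MonoidHom.ext fun x => ?_
  show a.1 ((a.1⁻¹ : MulAut G) x) = x
  simp [MulAut.inv_def]

lemma inv_comp (a : {α : MulAut G // d α.toMonoidHom = 1 ∨ d α.toMonoidHom = -1}) :
    (show Monoid.End G from MulEquiv.toMonoidHom a.1⁻¹) * (show Monoid.End G from MulEquiv.toMonoidHom a.1) = 1 := by
  refine MonoidHom.ext fun x => ?_
  show (a.1⁻¹ : MulAut G) (a.1 x) = x
  simp [MulAut.inv_def]

lemma eps_cast_inv (a : {α : MulAut G // d α.toMonoidHom = 1 ∨ d α.toMonoidHom = -1}) :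
    ((eps d a : ℤ) : ZMod (Nat.card G)) = d (a.1⁻¹).toMonoidHom := by
  have hc : d a.1.toMonoidHom * d (a.1⁻¹).toMonoidHom = 1 := by
    exact (map_mul d _ _).symm.trans ((congrArg d (comp_inv d a)).trans (map_one d))
  have h := eps_cast d a
  have hsq : ((eps d a : ℤ) : ZMod (Nat.card G)) * ((eps d a : ℤ) : ZMod (Nat.card G)) = 1 := by
    rw [← Int.cast_mul, eps_sq, Int.cast_one]
  calc ((eps d a : ℤ) : ZMod (Nat.card G))
      = ((eps d a : ℤ) : ZMod (Nat.card G)) * 1 := (mul_one _).symm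
    _ = ((eps d a : ℤ) : ZMod (Nat.card G)) * (d a.1.toMonoidHom * d (a.1⁻¹).toMonoidHom) := by rw [hc]
    _ = (((eps d a : ℤ) : ZMod (Nat.card G)) * d a.1.toMonoidHom) * d (a.1⁻¹).toMonoidHom := by ring
    _ = (((eps d a : ℤ) : ZMod (Nat.card G)) * ((eps d a : ℤ) : ZMod (Nat.card G))) * d (a.1⁻¹).toMonoidHom := by rw [h]
    _ = 1 * d (a.1⁻¹).toMonoidHom := by rw [hsq]
    _ = _ := one_mul _

noncomputable def bwd (a : {α : MulAut G // d α.toMonoidHom = 1 ∨ d α.toMonoidHom = -1}) :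
    (SFM (Monoid.End G) (Nat.card G) d)ˣ where
  val := ⟨a.1.toMonoidHom, eps d a, eps_cast d a⟩
  inv := ⟨(a.1⁻¹).toMonoidHom, eps d a, eps_cast_inv d a⟩
  val_inv := SFM.ext' (comp_inv d a) (eps_sq d a)
  inv_val := SFM.ext' (inv_comp d a) (eps_sq d a)

end SFMaux

/-- For a finite group `G` with `|G| ≥ 3` and a monoid homomorphism
`d : End(G) → (ℤ/|G|, ×)`, the group of units of `M(G)` is isomorphic to
`{α ∈ Aut(G) | d α = ±1}`; the unit corresponding to `α` lies in component `M_α`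
and its integer is the unique element of `{±1}` congruent to `d α` mod `|G|`. -/
theorem spaceFormMonoid_units (G : Type*) [Group G] [Finite G]
    (h3 : 3 ≤ Nat.card G) (d : Monoid.End G →* ZMod (Nat.card G)) :
    ∃ e : (SFM (Monoid.End G) (Nat.card G) d)ˣ ≃
        {α : MulAut G // d α.toMonoidHom = 1 ∨ d α.toMonoidHom = -1},
      (∀ u v : (SFM (Monoid.End G) (Nat.card G) d)ˣ,
          ((e (u * v) : MulAut G)) = (e u : MulAut G) * (e v : MulAut G)) ∧
      (∀ u : (SFM (Monoid.End G) (Nat.card G) d)ˣ,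
          ((u : SFM (Monoid.End G) (Nat.card G) d)).1 = (e u : MulAut G).toMonoidHom ∧
          (((u : SFM (Monoid.End G) (Nat.card G) d)).2.1 = 1 ∨
            ((u : SFM (Monoid.End G) (Nat.card G) d)).2.1 = -1)) := by
  classical
  have hm : (-1 : ZMod (Nat.card G)) ≠ 1 := by
    intro h
    have hz : ((2 : ℕ) : ZMod (Nat.card G)) = 0 := by
      push_cast
      linear_combination -h
    haveI : NeZero (Nat.card G) := ⟨by omega⟩
    have hd : Nat.card G ∣ 2 := (CharP.cast_eq_zero_iff (ZMod (Nat.card G)) _ 2).mp hz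
    have := Nat.le_of_dvd (by norm_num) hd
    omega
  refine ⟨⟨SFMaux.fwd d, SFMaux.bwd d, ?_, ?_⟩, ?_, ?_⟩
  · intro u
    apply Units.ext
    refine SFMaux.SFM.ext' ?_ ?_
    · exact SFMaux.theAut_toMonoidHom d u
    · show SFMaux.eps d (SFMaux.fwd d u) = u.val.2.1
      have h2 := u.val.2.2
      have hk : d (SFMaux.fwd d u).1.toMonoidHom = d u.val.1 :=
        congrArg d (SFMaux.theAut_toMonoidHom d u)
      unfold SFMaux.eps
      rcases SFMaux.snd_pm d u with h | h
      · have h1 : d (SFMaux.fwd d u).1.toMonoidHom = 1 := by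
          rw [hk, ← h2, h]; norm_num
        rw [if_pos h1, h]
      · have h1 : d (SFMaux.fwd d u).1.toMonoidHom = -1 := by
          rw [hk, ← h2, h]; push_cast; ring
        have hne : d (SFMaux.fwd d u).1.toMonoidHom ≠ 1 := by
          rw [h1]; exact hm
        rw [if_neg hne, h]
  · intro a
    apply Subtype.ext
    show SFMaux.theAut d (SFMaux.bwd d a) = a.1
    exact MulEquiv.ext fun x => rfl
  · intro u v
    exact MulEquiv.ext fun x => rfl
  · intro u
    exact ⟨(SFMaux.theAut_toMonoidHom d u).symm, SFMaux.snd_pm d u⟩
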